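/- (No two robots attain the minimum angle sequence in the same direction.) Let n ≥ 1, let θ : Fin n → ℝ be an aperiodic gap sequence, and let i, j ∈ Fin n with i ≠ j. Then it is not the case that s_i = M and s_j = M, and it is not the case that t_i = M and t_j = M. Consequently, if i and j are two distinct nominees, then one of them attains the lexicographic minimum M by its forward sequence and the other by its backward sequence. -/

import Mathlib

/-- The rotation of a gap sequence `θ : Fin n → ℝ` by `k`: `rot k θ = fun j => θ (j + k)`. -/
def rot {n : ℕ} (k : Fin n) (θ : Fin n → ℝ) : Fin n → ℝ := fun j => θ (j + k)

/-- A gap sequence is aperiodic if no nontrivial rotation fixes it. -/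
def Aperiodic {n : ℕ} [NeZero n] (θ : Fin n → ℝ) : Prop :=
  ∀ k : Fin n, k ≠ 0 → rot k θ ≠ θ

/-- Forward angle sequence of robot `i`: `s_i = fun j => θ (i + j)`. -/
def fwd {n : ℕ} (θ : Fin n → ℝ) (i : Fin n) : Fin n → ℝ := fun j => θ (i + j)

/-- Backward angle sequence of robot `i`: `t_i = fun j => θ (i - 1 - j)`. -/
def bwd {n : ℕ} [NeZero n] (θ : Fin n → ℝ) (i : Fin n) : Fin n → ℝ := fun j => θ (i - 1 - j)

lemma fwd_inj {n : ℕ} [NeZero n] {θ : Fin n → ℝ} (hθ : Aperiodic θ) {i j : Fin n}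
    (h : fwd θ i = fwd θ j) : i = j := by
  by_contra hij
  apply hθ (i - j) (sub_ne_zero.mpr hij)
  funext k
  have hk := congrFun h (k - j)
  simp only [fwd] at hk
  have h1 : i + (k - j) = k + (i - j) := by abel
  rw [h1] at hk
  simpa [rot] using hk

lemma bwd_inj {n : ℕ} [NeZero n] {θ : Fin n → ℝ} (hθ : Aperiodic θ) {i j : Fin n}
    (h : bwd θ i = bwd θ j) : i = j := by
  by_contra hij
  apply hθ (j - i) (sub_ne_zero.mpr (Ne.symm hij))
  funext k
  have hk := congrFun h (i - 1 - k)
  simp only [bwd] at hk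
  have h1 : i - 1 - (i - 1 - k) = k := by abel
  have h2 : j - 1 - (i - 1 - k) = k + (j - i) := by abel
  rw [h1, h2] at hk
  simpa [rot] using hk.symm

/-- No two distinct robots attain the lexicographic minimum angle sequence `M` in the same
direction; consequently, two distinct nominees attain `M` in opposite directions. -/
theorem no_two_nominees_same_direction {n : ℕ} [NeZero n] (θ : Fin n → ℝ)
    (hθ : Aperiodic θ) (M : Lex (Fin n → ℝ))
    (hM : IsLeast ((Set.range fun i : Fin n => toLex (fwd θ i)) ∪
                   (Set.range fun i : Fin n => toLex (bwd θ i))) M)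
    (i j : Fin n) (hij : i ≠ j) :
    ¬(toLex (fwd θ i) = M ∧ toLex (fwd θ j) = M) ∧
    ¬(toLex (bwd θ i) = M ∧ toLex (bwd θ j) = M) ∧
    (((toLex (fwd θ i) = M ∨ toLex (bwd θ i) = M) ∧
      (toLex (fwd θ j) = M ∨ toLex (bwd θ j) = M)) →
      ((toLex (fwd θ i) = M ∧ toLex (bwd θ j) = M) ∨
       (toLex (bwd θ i) = M ∧ toLex (fwd θ j) = M))) := by
  have hf : ¬(toLex (fwd θ i) = M ∧ toLex (fwd θ j) = M) := by
    rintro ⟨h1, h2⟩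
    exact hij (fwd_inj hθ (toLex.injective (h1.trans h2.symm)))
  have hb : ¬(toLex (bwd θ i) = M ∧ toLex (bwd θ j) = M) := by
    rintro ⟨h1, h2⟩
    exact hij (bwd_inj hθ (toLex.injective (h1.trans h2.symm)))
  refine ⟨hf, hb, ?_⟩
  rintro ⟨hi | hi, hj | hj⟩
  · exact absurd ⟨hi, hj⟩ hf
  · exact Or.inl ⟨hi, hj⟩
  · exact Or.inr ⟨hi, hj⟩
  · exact absurd ⟨hi, hj⟩ hb
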